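/- Fix m ≥ 1. Suppose that for every maximal intersecting subfamily F of P([m]) there exist nonnegative reals (c_a)_{a∈[m]} with Σ_{a∈[m]} c_a = 1 and nonnegative reals (λ_{(A,B)})_{A⊆B⊆[m]} such that vec(F) = Σ_{a∈[m]} c_a · vec(Star_a(P([m]))) + Σ_{A⊆B⊆[m]} λ_{(A,B)} (e_B − e_A). Then for every subset-closed family G ⊆ P([m]) and every intersecting subfamily H ⊆ G there exists a ∈ [m] with |H| ≤ |Star_a(G)|; that is, some star is among the largest intersecting subfamilies of G. -/

import Mathlib

open Finset

variable {m : ℕ}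

/-- A family of finsets is intersecting if any two members meet. -/
def IsIntersecting (F : Finset (Finset (Fin m))) : Prop :=
  ∀ A ∈ F, ∀ B ∈ F, (A ∩ B).Nonempty

/-- A maximal intersecting subfamily of the power set of `Fin m`. -/
def IsMaxIntersecting (F : Finset (Finset (Fin m))) : Prop :=
  IsIntersecting F ∧ ∀ G : Finset (Finset (Fin m)), IsIntersecting G → F ⊆ G → G ⊆ F

/-- A family is subset-closed if it contains all subsets of its members. -/
def IsSubsetClosed (F : Finset (Finset (Fin m))) : Prop :=
  ∀ A ∈ F, ∀ B ⊆ A, B ∈ F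

/-- The embedding of a family into `ℝ^{P([m])}`. -/
def famVec (F : Finset (Finset (Fin m))) : Finset (Fin m) → ℝ := fun A =>
  if A ∈ F ∧ Aᶜ ∉ F then 1 else if A ∉ F ∧ Aᶜ ∈ F then -1 else 0

/-- The standard basis vector `e_A` of `ℝ^{P([m])}`. -/
def stdBasis (A : Finset (Fin m)) : Finset (Fin m) → ℝ := fun B => if B = A then 1 else 0

/-- The star of a family centered at `a`. -/
def starFam (a : Fin m) (F : Finset (Finset (Fin m))) : Finset (Finset (Fin m)) :=
  F.filter fun A => a ∈ A

/-- The setwise complement (dual) `F* = {Aᶜ : A ∈ F}`. -/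
def dualFam (F : Finset (Finset (Fin m))) : Finset (Finset (Fin m)) :=
  F.image fun A => Aᶜ

/-- Any intersecting family extends to a maximal one. -/
lemma exists_maxIntersecting (H : Finset (Finset (Fin m))) (hH : IsIntersecting H) :
    ∃ F : Finset (Finset (Fin m)), IsMaxIntersecting F ∧ H ⊆ F := by
  classical
  obtain ⟨F, hFmem, hFmax⟩ := Finset.exists_max_image
    ((univ : Finset (Finset (Finset (Fin m)))).filter fun F => IsIntersecting F ∧ H ⊆ F)
    Finset.card ⟨H, by simp [hH]⟩
  simp only [Finset.mem_filter, Finset.mem_univ, true_and] at hFmem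
  refine ⟨F, ⟨hFmem.1, ?_⟩, hFmem.2⟩
  intro G hG hFG
  have hGmem : G ∈ (univ : Finset (Finset (Finset (Fin m)))).filter
      fun F => IsIntersecting F ∧ H ⊆ F := by
    simp [hG, hFmem.2.trans hFG]
  have := hFmax G hGmem
  rw [Finset.eq_of_subset_of_card_le hFG this]

/-- In a maximal intersecting family, exactly one of `A`, `Aᶜ` belongs. -/
lemma maxIntersecting_compl (hm : 1 ≤ m) (F : Finset (Finset (Fin m)))
    (hF : IsMaxIntersecting F) : ∀ A : Finset (Fin m), A ∈ F ↔ Aᶜ ∉ F := by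
  classical
  have hneU : (univ : Finset (Fin m)).Nonempty := ⟨⟨0, hm⟩, mem_univ _⟩
  have hu : (univ : Finset (Fin m)) ∈ F := by
    have hint : IsIntersecting (insert univ F) := by
      intro A hA B hB
      rcases Finset.mem_insert.mp hA with rfl | hA
      · rcases Finset.mem_insert.mp hB with rfl | hB
        · simpa using hneU
        · have := hF.1 B hB B hB
          simpa using this
      · rcases Finset.mem_insert.mp hB with rfl | hB
        · have := hF.1 A hA A hA
          simpa using this
        · exact hF.1 A hA B hB
    exact hF.2 _ hint (Finset.subset_insert _ _) (Finset.mem_insert_self _ _)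
  intro A
  constructor
  · intro hA hAc
    have := hF.1 A hA Aᶜ hAc
    simp at this
  · intro hAc
    by_contra hA
    -- A ≠ ∅ and A ≠ univ
    have hAne : A.Nonempty := by
      rcases A.eq_empty_or_nonempty with rfl | h
      · exact absurd (by simpa using hu : (∅ᶜ : Finset (Fin m)) ∈ F) hAc
      · exact h
    have hAcne : Aᶜ.Nonempty := by
      rcases Aᶜ.eq_empty_or_nonempty with h | h
      · exact absurd (by rw [Finset.compl_eq_empty_iff] at h; exact h ▸ hu) hA
      · exact h
    have key : ∀ X : Finset (Fin m), X.Nonempty → X ∉ F → ∃ B ∈ F, X ∩ B = ∅ := by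
      intro X hXne hX
      by_contra hno
      push_neg at hno
      have hfe : ∀ R ∈ F, (X ∩ R).Nonempty := fun R hR =>
        hno R hR
      have hint : IsIntersecting (insert X F) := by
        intro P hP Q hQ
        rcases Finset.mem_insert.mp hP with hPX | hP'
        · rcases Finset.mem_insert.mp hQ with hQX | hQ'
          · rw [hPX, hQX]
            simpa using hXne
          · rw [hPX]
            exact hfe Q hQ'
        · rcases Finset.mem_insert.mp hQ with hQX | hQ'
          · rw [hQX, Finset.inter_comm]
            exact hfe P hP'
          · exact hF.1 P hP' Q hQ'
      exact hX (hF.2 _ hint (Finset.subset_insert _ _) (Finset.mem_insert_self _ _))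
    obtain ⟨B, hB, hAB⟩ := key A hAne hA
    obtain ⟨C, hC, hAC⟩ := key Aᶜ hAcne hAc
    obtain ⟨x, hx⟩ := hF.1 B hB C hC
    rw [Finset.mem_inter] at hx
    have hxA : x ∉ A := by
      intro h
      have : x ∈ A ∩ B := Finset.mem_inter.mpr ⟨h, hx.1⟩
      simp [hAB] at this
    have hxAc : x ∉ Aᶜ := by
      intro h
      have : x ∈ Aᶜ ∩ C := Finset.mem_inter.mpr ⟨h, hx.2⟩
      simp [hAC] at this
    exact hxAc (Finset.mem_compl.mpr hxA)

/-- Summing `famVec F` over a family `G` when `F` contains exactly one of each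
complementary pair. -/
lemma sum_famVec_eq (G F : Finset (Finset (Fin m)))
    (hF : ∀ A : Finset (Fin m), A ∈ F ↔ Aᶜ ∉ F) :
    ∑ D ∈ G, famVec F D =
      2 * ((G.filter (· ∈ F)).card : ℝ) - (G.card : ℝ) := by
  classical
  have key : ∀ D : Finset (Fin m),
      famVec F D = 2 * (if D ∈ F then (1 : ℝ) else 0) - 1 := by
    intro D
    unfold famVec
    by_cases h : D ∈ F
    · simp [h, (hF D).mp h]
      norm_num
    · have h2 : Dᶜ ∈ F := by
        by_contra hc
        exact h ((hF D).mpr hc)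
      simp [h, h2]
  simp only [key]
  rw [Finset.sum_sub_distrib, ← Finset.mul_sum, Finset.sum_boole, Finset.sum_const,
    nsmul_eq_mul, mul_one]

lemma star_compl (a : Fin m) :
    ∀ A : Finset (Fin m), A ∈ starFam a univ ↔ Aᶜ ∉ starFam a univ := by
  intro A
  simp [starFam, Finset.mem_filter]

lemma filter_star (a : Fin m) (G : Finset (Finset (Fin m))) :
    G.filter (· ∈ starFam a univ) = starFam a G := by
  apply Finset.filter_congr
  intro A _
  simp [starFam]

/-- Kleitman's conjecture (for ground set size `m`) implies Chvátal's conjecture: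
if every maximal intersecting subfamily of `P([m])` admits the conical decomposition into
star vectors and edge vectors, then for every subset-closed family `G` and every intersecting
subfamily `H ⊆ G`, some star of `G` is at least as large as `H`. -/
theorem kleitman_implies_chvatal (m : ℕ) (hm : 1 ≤ m)
    (hKleitman : ∀ F : Finset (Finset (Fin m)), IsMaxIntersecting F →
      ∃ (c : Fin m → ℝ) (lam : Finset (Fin m) → Finset (Fin m) → ℝ),
        (∀ a, 0 ≤ c a) ∧ (∑ a, c a = 1) ∧
        (∀ A B : Finset (Fin m), A ⊆ B → 0 ≤ lam A B) ∧
        famVec F = (∑ a, c a • famVec (starFam a Finset.univ)) +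
          ∑ B : Finset (Fin m), ∑ A ∈ B.powerset, lam A B • (stdBasis B - stdBasis A)) :
    ∀ G : Finset (Finset (Fin m)), IsSubsetClosed G →
      ∀ H ⊆ G, IsIntersecting H → ∃ a : Fin m, H.card ≤ (starFam a G).card := by
  classical
  intro G hG H hHG hH
  obtain ⟨F, hFmax, hHF⟩ := exists_maxIntersecting H hH
  obtain ⟨c, lam, hc0, hc1, hlam0, hdecomp⟩ := hKleitman F hFmax
  have hcompl := maxIntersecting_compl hm F hFmax
  have hne : (univ : Finset (Fin m)).Nonempty := ⟨⟨0, hm⟩, mem_univ _⟩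
  obtain ⟨a0, -, ha0⟩ := Finset.exists_max_image univ (fun a => (starFam a G).card) hne
  refine ⟨a0, ?_⟩
  -- sum the decomposition over G
  have hsum := congrArg (fun v : Finset (Fin m) → ℝ => ∑ D ∈ G, v D) hdecomp
  simp only [Pi.add_apply, Finset.sum_apply, Pi.smul_apply, Pi.sub_apply,
    smul_eq_mul] at hsum
  rw [Finset.sum_add_distrib] at hsum
  -- left-hand side
  rw [sum_famVec_eq G F hcompl] at hsum
  -- star part
  have hstarpart :
      ∑ D ∈ G, ∑ a, c a * famVec (starFam a univ) D
        ≤ 2 * ((starFam a0 G).card : ℝ) - (G.card : ℝ) := by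
    rw [Finset.sum_comm]
    have heach : ∀ a : Fin m, ∑ D ∈ G, c a * famVec (starFam a univ) D
        = c a * (2 * ((starFam a G).card : ℝ) - (G.card : ℝ)) := by
      intro a
      rw [← Finset.mul_sum, sum_famVec_eq G (starFam a univ) (star_compl a), filter_star]
    calc ∑ a, ∑ D ∈ G, c a * famVec (starFam a univ) D
        = ∑ a, c a * (2 * ((starFam a G).card : ℝ) - (G.card : ℝ)) := by
          exact Finset.sum_congr rfl fun a _ => heach a
      _ ≤ ∑ a, c a * (2 * ((starFam a0 G).card : ℝ) - (G.card : ℝ)) := by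
          apply Finset.sum_le_sum
          intro a _
          apply mul_le_mul_of_nonneg_left _ (hc0 a)
          have : ((starFam a G).card : ℝ) ≤ ((starFam a0 G).card : ℝ) := by
            exact_mod_cast ha0 a (mem_univ a)
          linarith
      _ = 2 * ((starFam a0 G).card : ℝ) - (G.card : ℝ) := by
          rw [← Finset.sum_mul, hc1, one_mul]
  -- lambda part is nonpositive
  have hlampart :
      ∑ D ∈ G, ∑ B : Finset (Fin m), ∑ A ∈ B.powerset,
        lam A B * (stdBasis B D - stdBasis A D) ≤ 0 := by
    rw [Finset.sum_comm]
    apply Finset.sum_nonpos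
    intro B _
    rw [Finset.sum_comm]
    apply Finset.sum_nonpos
    intro A hA
    have hAB : A ⊆ B := Finset.mem_powerset.mp hA
    rw [← Finset.mul_sum, Finset.sum_sub_distrib]
    have hB : ∑ D ∈ G, stdBasis B D = if B ∈ G then (1 : ℝ) else 0 := by
      simp only [stdBasis]
      rw [Finset.sum_ite_eq' G B (fun _ => (1 : ℝ))]
    have hA' : ∑ D ∈ G, stdBasis A D = if A ∈ G then (1 : ℝ) else 0 := by
      simp only [stdBasis]
      rw [Finset.sum_ite_eq' G A (fun _ => (1 : ℝ))]
    rw [hB, hA']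
    apply mul_nonpos_of_nonneg_of_nonpos (hlam0 A B hAB)
    by_cases hBG : B ∈ G
    · have : A ∈ G := hG B hBG A hAB
      simp [hBG, this]
    · simp only [hBG, if_neg, if_false]
      split <;> norm_num
  -- combine
  have hcard : (H.card : ℝ) ≤ ((G.filter (· ∈ F)).card : ℝ) := by
    have : H ⊆ G.filter (· ∈ F) := by
      intro A hA
      exact Finset.mem_filter.mpr ⟨hHG hA, hHF hA⟩
    exact_mod_cast Finset.card_le_card this
  have hfinal : ((G.filter (· ∈ F)).card : ℝ) ≤ ((starFam a0 G).card : ℝ) := by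
    linarith [hsum, hstarpart, hlampart]
  exact_mod_cast hcard.trans hfinal
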